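/- Let d ≥ 1 and let N = (n_1,…,n_d) be a d-tuple of positive integers. For every complex s with Re(s²) > 0, ∑_{Λ_K ≠ 0} log(s² + Λ_K) = V(N) · 𝓘_d(s) + 𝓗_N(s), where the sum runs over the nonzero eigenvalues Λ_K, log denotes the principal branch of the complex logarithm, 𝓘_d(s) = −∫_0^∞ (e^{−s²t} e^{−2dt} I_0(2t)^d − e^{−t}) dt/t, and 𝓗_N(s) = −∫_0^∞ (e^{−s²t}[θ_N(t) − V(N) e^{−2dt} I_0(2t)^d − 1] + e^{−t}) dt/t. -/

import Mathlib

open MeasureTheory Real Filter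

/-- The modified `I`-Bessel function of integer order `x`, via its integral
representation `I_x(t) = (1/π) ∫_0^π e^{t cos θ} cos(xθ) dθ`. -/
noncomputable def besselI (x : ℤ) (t : ℝ) : ℝ :=
  (1 / Real.pi) * ∫ θ in (0:ℝ)..Real.pi, Real.exp (t * Real.cos θ) * Real.cos ((x : ℝ) * θ)

/-- Eigenvalues of the combinatorial Laplacian on the discrete torus determined by `N`. -/
noncomputable def Lam (d : ℕ) (N : Fin d → ℕ) (K : (j : Fin d) → Fin (N j)) : ℝ :=
  2 * d - ∑ j, 2 * Real.cos (2 * Real.pi * (K j : ℝ) / (N j : ℝ))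

/-- The theta function (heat trace) of the discrete torus determined by `N`. -/
noncomputable def discTheta (d : ℕ) (N : Fin d → ℕ) (t : ℝ) : ℝ :=
  ∑ K : ((j : Fin d) → Fin (N j)), Real.exp (-(Lam d N K) * t)

/-- The function `𝓘_d(s)` (complex Gauss transform version). -/
noncomputable def mathcalI (d : ℕ) (s : ℂ) : ℂ :=
  -∫ t in Set.Ioi (0:ℝ),
    (Complex.exp (-s ^ 2 * (t : ℂ)) * ((Real.exp (-(2 * d * t)) : ℝ) : ℂ) *
        ((besselI 0 (2 * t) : ℝ) : ℂ) ^ d - ((Real.exp (-t) : ℝ) : ℂ)) / (t : ℂ)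

/-- The function `𝓗_N(s)`. -/
noncomputable def mathcalH (d : ℕ) (N : Fin d → ℕ) (s : ℂ) : ℂ :=
  -∫ t in Set.Ioi (0:ℝ),
    (Complex.exp (-s ^ 2 * (t : ℂ)) *
        (((discTheta d N t : ℝ) : ℂ) - ((∏ j, (N j : ℝ)) : ℝ) *
          ((Real.exp (-(2 * d * t)) : ℝ) : ℂ) * ((besselI 0 (2 * t) : ℝ) : ℂ) ^ d - 1)
      + ((Real.exp (-t) : ℝ) : ℂ)) / (t : ℂ)

noncomputable def uu (t : ℝ) : ℝ := Real.exp (-(2 * t)) * besselI 0 (2 * t)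

set_option linter.unusedVariables false

/-- Segment representation of the Frullani integrand. -/
lemma seg_repr (z : ℂ) {t : ℝ} (ht : 0 < t) :
    (Complex.exp (-(t:ℂ)) - Complex.exp (-z * t)) / t
      = ∫ u in (0:ℝ)..1, (z - 1) * Complex.exp (-(1 + (u:ℂ) * (z - 1)) * t) := by
  have ht' : (t:ℂ) ≠ 0 := by exact_mod_cast ht.ne'
  have hD : ∀ u : ℝ, HasDerivAt
      (fun u : ℝ => -(1/(t:ℂ)) * Complex.exp (-(1 + (u:ℂ) * (z - 1)) * t))
      ((z - 1) * Complex.exp (-(1 + (u:ℂ) * (z - 1)) * t)) u := by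
    intro u
    have h1 : HasDerivAt (fun w : ℂ => -(1/(t:ℂ)) * Complex.exp (-(1 + w * (z - 1)) * t))
        ((z - 1) * Complex.exp (-(1 + (u:ℂ) * (z - 1)) * t)) (u:ℂ) := by
      have hg : HasDerivAt (fun w : ℂ => -(1 + w * (z - 1)) * t) (-(z - 1) * t) (u:ℂ) := by
        simpa using ((((hasDerivAt_id (u:ℂ)).mul_const (z-1)).const_add 1).neg.mul_const (t:ℂ))
      have := (hg.cexp).const_mul (-(1/(t:ℂ)))
      refine this.congr_deriv ?_
      field_simp
    exact h1.comp_ofReal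
  have key := intervalIntegral.integral_eq_sub_of_hasDerivAt (a := (0:ℝ)) (b := 1)
      (f := fun u : ℝ => -(1/(t:ℂ)) * Complex.exp (-(1 + (u:ℂ) * (z - 1)) * t))
      (fun u _ => hD u) ?_
  · rw [key]
    push_cast
    rw [show (1 : ℂ) + 1 * (z - 1) = z by ring]
    field_simp
    ring
  · apply Continuous.intervalIntegrable
    fun_prop


lemma seg_norm (z : ℂ) (hz : 0 < z.re) {u t : ℝ} (hu0 : 0 ≤ u) (hu1 : u ≤ 1) (ht : 0 ≤ t) :
    ‖(z - 1) * Complex.exp (-(1 + (u:ℂ) * (z - 1)) * t)‖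
      ≤ ‖z - 1‖ * Real.exp (-(min 1 z.re) * t) := by
  rw [norm_mul]
  apply mul_le_mul_of_nonneg_left _ (norm_nonneg _)
  rw [Complex.norm_exp]
  apply Real.exp_le_exp.2
  have hre : ((-(1 + (u:ℂ) * (z - 1)) * t).re) = -(1 + u * (z.re - 1)) * t := by
    simp [Complex.mul_re, Complex.add_re, Complex.sub_re]
    try ring
  rw [hre]
  have : min 1 z.re ≤ 1 + u * (z.re - 1) := by
    rcases le_total 1 z.re with h | h
    · have : (0:ℝ) ≤ u * (z.re - 1) := mul_nonneg hu0 (by linarith)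
      calc min 1 z.re ≤ 1 := min_le_left _ _
        _ ≤ _ := by linarith
    · have : u * (z.re - 1) ≥ 1 * (z.re - 1) := by
        apply mul_le_mul_of_nonpos_right hu1 (by linarith)
      calc min 1 z.re ≤ z.re := min_le_right _ _
        _ ≤ _ := by linarith
  nlinarith

lemma frullani_norm (z : ℂ) (hz : 0 < z.re) {t : ℝ} (ht : 0 < t) :
    ‖(Complex.exp (-(t:ℂ)) - Complex.exp (-z * t)) / t‖
      ≤ ‖z - 1‖ * Real.exp (-(min 1 z.re) * t) := by
  rw [seg_repr z ht]
  have := intervalIntegral.norm_integral_le_of_norm_le_const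
    (a := (0:ℝ)) (b := 1) (C := ‖z - 1‖ * Real.exp (-(min 1 z.re) * t))
    (f := fun u : ℝ => (z - 1) * Complex.exp (-(1 + (u:ℂ) * (z - 1)) * t)) ?_
  · simpa using this
  · intro u hu
    rw [Set.uIoc_of_le (by norm_num)] at hu
    exact seg_norm z hz hu.1.le hu.2 ht.le


lemma integrable_cexp_neg_mul (a : ℂ) (ha : 0 < a.re) :
    IntegrableOn (fun t : ℝ => Complex.exp (-a * t)) (Set.Ioi (0:ℝ)) := by
  apply Integrable.mono' ((exp_neg_integrableOn_Ioi 0 ha).const_mul 1)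
  · apply Continuous.aestronglyMeasurable
    fun_prop
  · filter_upwards with t
    rw [Complex.norm_exp]
    simp [Complex.mul_re]

lemma integral_cexp_neg_mul (a : ℂ) (ha : 0 < a.re) :
    ∫ t in Set.Ioi (0:ℝ), Complex.exp (-a * t) = 1 / a := by
  have ha0 : a ≠ 0 := fun h => by simp [h] at ha
  have hD : ∀ x ∈ Set.Ioi (0:ℝ), HasDerivAt (fun t : ℝ => -(1/a) * Complex.exp (-a * t))
      (Complex.exp (-a * x)) x := by
    intro x _
    have h1 : HasDerivAt (fun w : ℂ => -(1/a) * Complex.exp (-a * w))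
        (Complex.exp (-a * (x:ℂ))) (x:ℂ) := by
      have hg : HasDerivAt (fun w : ℂ => -a * w) (-a) (x:ℂ) := by
        simpa using (hasDerivAt_id (x:ℂ)).const_mul (-a)
      have := (hg.cexp).const_mul (-(1/a))
      refine this.congr_deriv ?_
      field_simp
    exact h1.comp_ofReal
  have hT : Tendsto (fun t : ℝ => -(1/a) * Complex.exp (-a * t)) atTop (nhds 0) := by
    rw [tendsto_zero_iff_norm_tendsto_zero]
    have : (fun t : ℝ => ‖-(1/a) * Complex.exp (-a * t)‖)
        = fun t : ℝ => ‖(1/a)‖ * Real.exp (-a.re * t) := by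
      ext t
      rw [norm_mul, norm_neg, Complex.norm_exp]
      congr 1
      simp [Complex.mul_re]
    rw [this]
    simpa using (Real.tendsto_exp_neg_atTop_nhds_zero.comp
      (tendsto_id.const_mul_atTop ha)).const_mul ‖(1/a)‖
  have := integral_Ioi_of_hasDerivAt_of_tendsto (a := 0) ?_ hD (integrable_cexp_neg_mul a ha) hT
  · rw [this]; simp
  · apply Continuous.continuousWithinAt
    fun_prop


lemma re_aux (z : ℂ) (hz : 0 < z.re) {u : ℝ} (h0 : 0 ≤ u) (h1 : u ≤ 1) :
    min 1 z.re ≤ (1 + (u:ℂ) * (z - 1)).re := by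
  have : (1 + (u:ℂ) * (z - 1)).re = 1 + u * (z.re - 1) := by
    simp [Complex.mul_re]
  rw [this]
  rcases le_total 1 z.re with h | h
  · have : (0:ℝ) ≤ u * (z.re - 1) := mul_nonneg h0 (by linarith)
    calc min 1 z.re ≤ 1 := min_le_left _ _
      _ ≤ _ := by linarith
  · have : u * (z.re - 1) ≥ 1 * (z.re - 1) := mul_le_mul_of_nonpos_right h1 (by linarith)
    calc min 1 z.re ≤ z.re := min_le_right _ _
      _ ≤ _ := by linarith

lemma frullani (z : ℂ) (hz : 0 < z.re) :
    Complex.log z = ∫ t in Set.Ioi (0:ℝ),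
      (Complex.exp (-(t:ℂ)) - Complex.exp (-z * t)) / t := by
  set c : ℝ := min 1 z.re with hc
  have hc0 : 0 < c := lt_min one_pos hz
  -- integrability of the double integrand
  have hFcont : Continuous (Function.uncurry
      (fun (t u : ℝ) => (z - 1) * Complex.exp (-(1 + (u:ℂ) * (z - 1)) * t))) := by
    apply Continuous.mul continuous_const
    apply Complex.continuous_exp.comp
    fun_prop
  have hFint : Integrable (Function.uncurry
      (fun (t u : ℝ) => (z - 1) * Complex.exp (-(1 + (u:ℂ) * (z - 1)) * t)))
      ((volume.restrict (Set.Ioi (0:ℝ))).prod (volume.restrict (Set.Ioc (0:ℝ) 1))) := by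
    apply Integrable.mono' (g := fun p : ℝ × ℝ => (‖z - 1‖ * Real.exp (-c * p.1)) * 1)
    · exact Integrable.mul_prod ((exp_neg_integrableOn_Ioi 0 hc0).const_mul _)
        (integrable_const 1)
    · exact hFcont.aestronglyMeasurable
    · rw [Measure.prod_restrict]
      filter_upwards [ae_restrict_mem (measurableSet_Ioi.prod measurableSet_Ioc)] with p hp
      obtain ⟨ht, hu⟩ := hp
      obtain ⟨t, u⟩ := p
      simp only at ht hu ⊢
      rw [Function.uncurry, mul_one, norm_mul]
      apply mul_le_mul_of_nonneg_left _ (norm_nonneg _)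
      rw [Complex.norm_exp]
      apply Real.exp_le_exp.2
      have := re_aux z hz hu.1.le hu.2
      have hre : ((-(1 + (u:ℂ) * (z - 1)) * t).re) = -((1 + (u:ℂ) * (z - 1)).re) * t := by
        simp [Complex.mul_re]
      rw [hre]
      have ht' : (0:ℝ) ≤ t := le_of_lt (Set.mem_Ioi.1 ht)
      nlinarith
  have hne : ∀ u : ℝ, 0 ≤ u → u ≤ 1 → (1 + (u:ℂ) * (z - 1)) ≠ 0 := by
    intro u h0 h1 h
    have := re_aux z hz h0 h1
    rw [h, Complex.zero_re] at this
    exact absurd (lt_of_lt_of_le hc0 this) (lt_irrefl 0)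
  have step1 : Complex.log z
      = ∫ u in Set.Ioc (0:ℝ) 1, (z - 1) / (1 + (u:ℂ) * (z - 1)) := by
    rw [← intervalIntegral.integral_of_le (by norm_num : (0:ℝ) ≤ 1)]
    have hD : ∀ u ∈ Set.uIcc (0:ℝ) 1, HasDerivAt
        (fun u : ℝ => Complex.log (1 + (u:ℂ) * (z - 1)))
        ((z - 1) / (1 + (u:ℂ) * (z - 1))) u := by
      intro u hu
      rw [Set.uIcc_of_le (by norm_num : (0:ℝ) ≤ 1)] at hu
      have haff : HasDerivAt (fun u : ℝ => 1 + (u:ℂ) * (z - 1)) (z - 1) u := by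
        have : HasDerivAt (fun w : ℂ => 1 + w * (z - 1)) (z - 1) (u:ℂ) := by
          simpa using ((hasDerivAt_id (u:ℂ)).mul_const (z-1)).const_add 1
        exact this.comp_ofReal
      exact haff.clog_real (Or.inl (lt_of_lt_of_le hc0 (re_aux z hz hu.1 hu.2)))
    have key := intervalIntegral.integral_eq_sub_of_hasDerivAt hD ?_
    · rw [key]
      norm_num
    · apply ContinuousOn.intervalIntegrable
      apply ContinuousOn.div continuousOn_const
      · fun_prop
      · intro u hu
        rw [Set.uIcc_of_le (by norm_num : (0:ℝ) ≤ 1)] at hu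
        exact hne u hu.1 hu.2
  have step2 : ∫ u in Set.Ioc (0:ℝ) 1, (z - 1) / (1 + (u:ℂ) * (z - 1))
      = ∫ u in Set.Ioc (0:ℝ) 1, ∫ t in Set.Ioi (0:ℝ),
          (z - 1) * Complex.exp (-(1 + (u:ℂ) * (z - 1)) * t) := by
    apply setIntegral_congr_fun measurableSet_Ioc
    intro u hu
    simp only
    rw [integral_const_mul, integral_cexp_neg_mul _
      (lt_of_lt_of_le hc0 (re_aux z hz hu.1.le hu.2))]
    rw [div_eq_mul_one_div]
  have step3 := integral_integral_swap hFint
  rw [step1, step2, ← step3]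
  apply setIntegral_congr_fun measurableSet_Ioi
  intro t ht
  simp only
  rw [← intervalIntegral.integral_of_le (by norm_num : (0:ℝ) ≤ 1), ← seg_repr z ht]


lemma Lam_eq_sum (d : ℕ) (N : Fin d → ℕ) (K : (j : Fin d) → Fin (N j)) :
    Lam d N K = ∑ j, (2 - 2 * Real.cos (2 * Real.pi * (K j : ℝ) / (N j : ℝ))) := by
  unfold Lam
  rw [Finset.sum_sub_distrib]
  simp [Finset.card_univ, mul_comm]

lemma term_nonneg (x : ℝ) : 0 ≤ 2 - 2 * Real.cos x := by
  have := Real.cos_le_one x; linarith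

lemma Lam_nonneg (d : ℕ) (N : Fin d → ℕ) (K : (j : Fin d) → Fin (N j)) :
    0 ≤ Lam d N K := by
  rw [Lam_eq_sum]
  exact Finset.sum_nonneg fun j _ => term_nonneg _

lemma cos_frac_eq_one_iff {k n : ℕ} (hk : k < n) :
    Real.cos (2 * Real.pi * k / n) = 1 ↔ k = 0 := by
  constructor
  · intro h
    rw [Real.cos_eq_one_iff] at h
    obtain ⟨m, hm⟩ := h
    have hn : (0:ℝ) < n := by exact_mod_cast lt_of_le_of_lt (Nat.zero_le k) hk
    have hπ : (0:ℝ) < Real.pi := Real.pi_pos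
    have hmk : (m : ℝ) * n = k := by
      have : (m:ℝ) * (2 * Real.pi) * n = 2 * Real.pi * k := by
        field_simp at hm
        nlinarith [hm]
      nlinarith
    have hmval : (m:ℝ) = k / n := by
      rw [eq_div_iff hn.ne']
      exact hmk
    have hm0 : (0:ℝ) ≤ (m:ℝ) := by rw [hmval]; positivity
    have hm1 : (m:ℝ) < 1 := by
      rw [hmval, div_lt_one hn]
      exact_mod_cast hk
    have : m = 0 := by
      have h0 : (0:ℤ) ≤ m := by exact_mod_cast hm0
      have h1 : m < 1 := by exact_mod_cast hm1
      omega
    rw [this] at hmk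
    simp at hmk
    exact_mod_cast hmk.symm
  · intro h; simp [h]

lemma Lam_zero_iff (d : ℕ) (N : Fin d → ℕ) (K : (j : Fin d) → Fin (N j)) :
    Lam d N K = 0 ↔ ∀ j, (K j : ℕ) = 0 := by
  rw [Lam_eq_sum, Finset.sum_eq_zero_iff_of_nonneg (fun j _ => term_nonneg _)]
  constructor
  · intro h j
    have := h j (Finset.mem_univ j)
    have hcos : Real.cos (2 * Real.pi * (K j : ℝ) / (N j : ℝ)) = 1 := by linarith
    exact (cos_frac_eq_one_iff (K j).2).1 hcos
  · intro h j _
    rw [(cos_frac_eq_one_iff (K j).2).2 (h j)]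
    ring

lemma filter_zero_eq (d : ℕ) (N : Fin d → ℕ) (hN : ∀ j, 0 < N j) :
    Finset.univ.filter (fun K : (j : Fin d) → Fin (N j) => Lam d N K = 0)
      = {fun j => (⟨0, hN j⟩ : Fin (N j))} := by
  ext K
  simp [Lam_zero_iff, funext_iff, Fin.ext_iff]

lemma Lam_zero_pt (d : ℕ) (N : Fin d → ℕ) (hN : ∀ j, 0 < N j) :
    Lam d N (fun j => (⟨0, hN j⟩ : Fin (N j))) = 0 :=
  (Lam_zero_iff d N _).2 (fun _ => rfl)

lemma card_filter_ne (d : ℕ) (N : Fin d → ℕ) (hN : ∀ j, 0 < N j) :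
    ((Finset.univ.filter (fun K : (j : Fin d) → Fin (N j) => Lam d N K ≠ 0)).card : ℝ)
      = ∏ j, (N j : ℝ) - 1 := by
  classical
  have h2 := Finset.card_filter_add_card_filter_not
    (s := (Finset.univ : Finset ((j : Fin d) → Fin (N j))))
    (p := fun K => Lam d N K ≠ 0)
  have h1 : Finset.univ.filter (fun K : (j : Fin d) → Fin (N j) => ¬ Lam d N K ≠ 0)
      = {fun j => (⟨0, hN j⟩ : Fin (N j))} := by
    rw [← filter_zero_eq d N hN]
    simp [not_ne_iff]
  rw [h1] at h2
  simp only [Finset.card_singleton, Finset.card_univ, Fintype.card_pi, Fintype.card_fin] at h2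
  have := congrArg (fun n : ℕ => (n : ℝ)) h2
  push_cast at this
  linarith

lemma theta_eq (d : ℕ) (N : Fin d → ℕ) (hN : ∀ j, 0 < N j) (t : ℝ) :
    discTheta d N t
      = (∑ K ∈ Finset.univ.filter (fun K : (j : Fin d) → Fin (N j) => Lam d N K ≠ 0),
          Real.exp (-(Lam d N K) * t)) + 1 := by
  classical
  unfold discTheta
  rw [← Finset.sum_filter_add_sum_filter_not Finset.univ
      (fun K : (j : Fin d) → Fin (N j) => Lam d N K ≠ 0)]
  congr 1
  have h1 : Finset.univ.filter (fun K : (j : Fin d) → Fin (N j) => ¬ Lam d N K ≠ 0)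
      = {fun j => (⟨0, hN j⟩ : Fin (N j))} := by
    rw [← filter_zero_eq d N hN]
    simp [not_ne_iff]
  rw [h1, Finset.sum_singleton, Lam_zero_pt d N hN]
  simp


lemma besselI_zero_eq (t : ℝ) :
    besselI 0 t = (1 / Real.pi) * ∫ θ in (0:ℝ)..Real.pi, Real.exp (t * Real.cos θ) := by
  unfold besselI
  norm_num

lemma besselI_zero_continuous : Continuous (fun t : ℝ => besselI 0 t) := by
  simp only [besselI_zero_eq]
  apply Continuous.mul continuous_const
  exact intervalIntegral.continuous_parametric_intervalIntegral_of_continuous'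
    (f := fun (t θ : ℝ) => Real.exp (t * Real.cos θ)) (by fun_prop) 0 Real.pi

lemma uu_eq (t : ℝ) :
    uu t = (1 / Real.pi) * ∫ θ in (0:ℝ)..Real.pi, Real.exp (2 * t * (Real.cos θ - 1)) := by
  unfold uu
  rw [besselI_zero_eq, ← mul_assoc, mul_comm (Real.exp (-(2*t))) (1/Real.pi), mul_assoc,
    ← intervalIntegral.integral_const_mul]
  congr 1
  apply intervalIntegral.integral_congr
  intro θ _
  simp only
  rw [← Real.exp_add]
  congr 1
  ring

lemma uu_nonneg (t : ℝ) : 0 ≤ uu t := by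
  rw [uu_eq]
  apply mul_nonneg (by positivity)
  apply intervalIntegral.integral_nonneg Real.pi_pos.le
  intro θ _
  positivity

lemma uu_le_one {t : ℝ} (ht : 0 ≤ t) : uu t ≤ 1 := by
  rw [uu_eq]
  have hmono : (∫ θ in (0:ℝ)..Real.pi, Real.exp (2 * t * (Real.cos θ - 1)))
      ≤ ∫ _θ in (0:ℝ)..Real.pi, (1:ℝ) := by
    apply intervalIntegral.integral_mono_on Real.pi_pos.le
    · apply Continuous.intervalIntegrable; fun_prop
    · apply Continuous.intervalIntegrable; fun_prop
    · intro θ _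
      apply Real.exp_le_one_iff.2
      have := Real.cos_le_one θ
      nlinarith
  rw [intervalIntegral.integral_const, smul_eq_mul, mul_one, sub_zero] at hmono
  calc (1/Real.pi) * ∫ θ in (0:ℝ)..Real.pi, Real.exp (2 * t * (Real.cos θ - 1))
      ≤ (1/Real.pi) * Real.pi := by
        apply mul_le_mul_of_nonneg_left hmono (by positivity)
    _ = 1 := by field_simp

lemma one_sub_uu_le {t : ℝ} (ht : 0 ≤ t) : 1 - uu t ≤ 2 * t := by
  rw [uu_eq]
  have key : (∫ θ in (0:ℝ)..Real.pi, (1 - 2 * t * (1 - Real.cos θ)))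
      ≤ ∫ θ in (0:ℝ)..Real.pi, Real.exp (2 * t * (Real.cos θ - 1)) := by
    apply intervalIntegral.integral_mono_on Real.pi_pos.le
    · apply Continuous.intervalIntegrable; fun_prop
    · apply Continuous.intervalIntegrable; fun_prop
    · intro θ _
      have h1 : 1 + (2 * t * (Real.cos θ - 1)) ≤ Real.exp (2 * t * (Real.cos θ - 1)) := by
        linarith [Real.add_one_le_exp (2 * t * (Real.cos θ - 1))]
      nlinarith
  have hval : (∫ θ in (0:ℝ)..Real.pi, (1 - 2 * t * (1 - Real.cos θ)))
      = (1 - 2 * t) * Real.pi + 2 * t * (Real.sin Real.pi - Real.sin 0) := by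
    have h1 : (fun θ : ℝ => 1 - 2 * t * (1 - Real.cos θ))
        = fun θ : ℝ => (1 - 2 * t) + (2 * t) * Real.cos θ := by
      ext θ; ring
    rw [h1, intervalIntegral.integral_add (by apply Continuous.intervalIntegrable; fun_prop)
      (by apply Continuous.intervalIntegrable; fun_prop), intervalIntegral.integral_const,
      intervalIntegral.integral_const_mul, integral_cos]
    simp [smul_eq_mul]
    ring
  rw [Real.sin_pi, Real.sin_zero] at hval
  have hπ := Real.pi_pos
  have key2 : (1 - 2*t) * Real.pi ≤ ∫ θ in (0:ℝ)..Real.pi, Real.exp (2 * t * (Real.cos θ - 1)) := by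
    rw [hval] at key
    linarith
  have : (1/Real.pi) * ((1 - 2*t) * Real.pi)
      ≤ (1/Real.pi) * ∫ θ in (0:ℝ)..Real.pi, Real.exp (2 * t * (Real.cos θ - 1)) :=
    mul_le_mul_of_nonneg_left key2 (by positivity)
  have heq : (1/Real.pi) * ((1 - 2*t) * Real.pi) = 1 - 2*t := by field_simp
  linarith [heq ▸ this]

lemma one_sub_pow_le {u : ℝ} (h0 : 0 ≤ u) (h1 : u ≤ 1) (d : ℕ) :
    1 - u ^ d ≤ d * (1 - u) := by
  induction d with
  | zero => simp
  | succ n ih =>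
    have hp : u ^ n ≤ 1 := pow_le_one₀ h0 h1
    have hp0 : 0 ≤ u ^ n := pow_nonneg h0 n
    rw [pow_succ]
    push_cast
    nlinarith


lemma hh_eq (d : ℕ) (t : ℝ) :
    Real.exp (-(2 * d * t)) * besselI 0 (2 * t) ^ d = uu t ^ d := by
  unfold uu
  rw [mul_pow, ← Real.exp_nat_mul]
  ring_nf

lemma hh_mem (d : ℕ) {t : ℝ} (ht : 0 ≤ t) :
    0 ≤ Real.exp (-(2 * d * t)) * besselI 0 (2 * t) ^ d ∧
      Real.exp (-(2 * d * t)) * besselI 0 (2 * t) ^ d ≤ 1 ∧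
      1 - Real.exp (-(2 * d * t)) * besselI 0 (2 * t) ^ d ≤ 2 * d * t := by
  rw [hh_eq]
  refine ⟨pow_nonneg (uu_nonneg t) d, pow_le_one₀ (uu_nonneg t) (uu_le_one ht), ?_⟩
  calc 1 - uu t ^ d ≤ d * (1 - uu t) := one_sub_pow_le (uu_nonneg t) (uu_le_one ht) d
    _ ≤ d * (2 * t) := by
        apply mul_le_mul_of_nonneg_left (one_sub_uu_le ht) (Nat.cast_nonneg d)
    _ = 2 * d * t := by ring

lemma integrable_frullani_term (z : ℂ) (hz : 0 < z.re) :
    IntegrableOn (fun t : ℝ => (Complex.exp (-(t:ℂ)) - Complex.exp (-z * t)) / t)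
      (Set.Ioi (0:ℝ)) := by
  have hc0 : 0 < min 1 z.re := lt_min one_pos hz
  apply Integrable.mono' ((exp_neg_integrableOn_Ioi 0 hc0).const_mul ‖z - 1‖)
  · apply ContinuousOn.aestronglyMeasurable _ measurableSet_Ioi
    apply ContinuousOn.div
    · apply Continuous.continuousOn; fun_prop
    · apply Continuous.continuousOn; fun_prop
    · intro t ht
      exact_mod_cast (ne_of_gt (Set.mem_Ioi.1 ht))
  · filter_upwards [ae_restrict_mem measurableSet_Ioi] with t ht
    exact frullani_norm z hz (Set.mem_Ioi.1 ht)

lemma integrable_fI (d : ℕ) (s : ℂ) (hs : 0 < (s ^ 2).re) :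
    IntegrableOn (fun t : ℝ =>
      (Complex.exp (-s ^ 2 * (t : ℂ)) * ((Real.exp (-(2 * d * t)) : ℝ) : ℂ) *
          ((besselI 0 (2 * t) : ℝ) : ℂ) ^ d - ((Real.exp (-t) : ℝ) : ℂ)) / (t : ℂ))
      (Set.Ioi (0:ℝ)) := by
  set c : ℝ := min 1 (s^2).re with hc
  have hc0 : 0 < c := lt_min one_pos hs
  apply Integrable.mono' ((exp_neg_integrableOn_Ioi 0 hc0).const_mul (2*d + ‖s^2 - 1‖))
  · apply ContinuousOn.aestronglyMeasurable _ measurableSet_Ioi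
    apply ContinuousOn.div
    · apply Continuous.continuousOn
      apply Continuous.sub
      · apply Continuous.mul
        · apply Continuous.mul
          · exact Complex.continuous_exp.comp (by fun_prop)
          · exact Complex.continuous_ofReal.comp (by fun_prop)
        · exact (Complex.continuous_ofReal.comp
            (besselI_zero_continuous.comp (by fun_prop))).pow d
      · exact Complex.continuous_ofReal.comp (by fun_prop)
    · apply Continuous.continuousOn; fun_prop
    · intro t ht
      exact_mod_cast (ne_of_gt (Set.mem_Ioi.1 ht))
  · filter_upwards [ae_restrict_mem measurableSet_Ioi] with t ht'
    have ht : 0 < t := Set.mem_Ioi.1 ht'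
    have htne : (t:ℂ) ≠ 0 := by exact_mod_cast ht.ne'
    set h : ℝ := Real.exp (-(2 * d * t)) * besselI 0 (2 * t) ^ d with hh
    obtain ⟨hh0, hh1, hh2⟩ := hh_mem d ht.le
    have hsplit : (Complex.exp (-s ^ 2 * (t : ℂ)) * ((Real.exp (-(2 * d * t)) : ℝ) : ℂ) *
          ((besselI 0 (2 * t) : ℝ) : ℂ) ^ d - ((Real.exp (-t) : ℝ) : ℂ)) / (t : ℂ)
        = Complex.exp (-s ^ 2 * t) * (((h - 1 : ℝ)) : ℂ) / t
          - (Complex.exp (-(t:ℂ)) - Complex.exp (-s^2 * t)) / t := by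
      rw [hh]
      push_cast
      field_simp
      ring
    rw [hsplit]
    apply le_trans (norm_sub_le _ _)
    have hb1 : ‖Complex.exp (-s ^ 2 * t) * (((h - 1 : ℝ)) : ℂ) / t‖
        ≤ 2 * d * Real.exp (-c * t) := by
      rw [norm_div, norm_mul, Complex.norm_exp,
        Complex.norm_real, Complex.norm_real, Real.norm_eq_abs t]
      have h1 : ((-s^2 * (t:ℂ)).re) = -(s^2).re * t := by simp [Complex.mul_re]
      rw [h1, Real.norm_eq_abs, abs_of_nonpos (by linarith), neg_sub, abs_of_pos ht]
      rw [div_le_iff₀ ht]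
      have he : Real.exp (-(s^2).re * t) ≤ Real.exp (-c * t) := by
        apply Real.exp_le_exp.2
        have : c ≤ (s^2).re := min_le_right _ _
        nlinarith
      calc Real.exp (-(s^2).re * t) * (1 - h)
          ≤ Real.exp (-c * t) * (2 * d * t) := by
            apply mul_le_mul he hh2 (by linarith) (Real.exp_nonneg _)
        _ = 2 * d * Real.exp (-c * t) * t := by ring
    have hb2 := frullani_norm (s^2) hs ht
    calc ‖Complex.exp (-s ^ 2 * t) * (((h - 1 : ℝ)) : ℂ) / t‖
          + ‖(Complex.exp (-(t:ℂ)) - Complex.exp (-s^2 * t)) / t‖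
        ≤ 2 * d * Real.exp (-c * t) + ‖s^2 - 1‖ * Real.exp (-c * t) := by
          apply add_le_add hb1 hb2
      _ = (2*d + ‖s^2 - 1‖) * Real.exp (-c * t) := by ring


/-- `∑_{Λ_K ≠ 0} log(s² + Λ_K) = V(N)·𝓘_d(s) + 𝓗_N(s)` for `Re(s²) > 0`. -/
theorem log_det_identity (d : ℕ) (hd : 1 ≤ d) (N : Fin d → ℕ)
    (hN : ∀ j, 0 < N j) (s : ℂ) (hs : 0 < (s ^ 2).re) :
    ∑ K ∈ Finset.univ.filter (fun K : (j : Fin d) → Fin (N j) => Lam d N K ≠ 0),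
        Complex.log (s ^ 2 + ((Lam d N K : ℝ) : ℂ))
      = ((∏ j, (N j : ℝ) : ℝ) : ℂ) * mathcalI d s + mathcalH d N s := by
  classical
  set filt := Finset.univ.filter (fun K : (j : Fin d) → Fin (N j) => Lam d N K ≠ 0) with hfilt
  set V : ℝ := ∏ j, (N j : ℝ) with hV
  set fI : ℝ → ℂ := fun t =>
    (Complex.exp (-s ^ 2 * (t : ℂ)) * ((Real.exp (-(2 * d * t)) : ℝ) : ℂ) *
        ((besselI 0 (2 * t) : ℝ) : ℂ) ^ d - ((Real.exp (-t) : ℝ) : ℂ)) / (t : ℂ) with hfIdef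
  set g : ℝ → ℂ := fun t =>
    (Complex.exp (-s ^ 2 * (t : ℂ)) *
        (((discTheta d N t : ℝ) : ℂ) - ((∏ j, (N j : ℝ)) : ℝ) *
          ((Real.exp (-(2 * d * t)) : ℝ) : ℂ) * ((besselI 0 (2 * t) : ℝ) : ℂ) ^ d - 1)
      + ((Real.exp (-t) : ℝ) : ℂ)) / (t : ℂ) with hgdef
  have eqI : mathcalI d s = -∫ t in Set.Ioi (0:ℝ), fI t := rfl
  have eqH : mathcalH d N s = -∫ t in Set.Ioi (0:ℝ), g t := rfl
  set T : ((j : Fin d) → Fin (N j)) → ℝ → ℂ := fun K t =>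
    (Complex.exp (-(t:ℂ)) - Complex.exp (-(s^2 + ((Lam d N K : ℝ):ℂ)) * t)) / t with hT
  have hre : ∀ K : (j : Fin d) → Fin (N j), 0 < (s^2 + ((Lam d N K : ℝ):ℂ)).re := by
    intro K
    rw [Complex.add_re, Complex.ofReal_re]
    linarith [Lam_nonneg d N K]
  have hTint : ∀ K ∈ filt, IntegrableOn (T K) (Set.Ioi (0:ℝ)) :=
    fun K _ => integrable_frullani_term _ (hre K)
  have hfIint : IntegrableOn fI (Set.Ioi (0:ℝ)) := integrable_fI d s hs
  have key : ∀ t ∈ Set.Ioi (0:ℝ), (∑ K ∈ filt, T K t) = -(((V:ℝ):ℂ) * fI t + g t) := by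
    intro t ht'
    have ht : (0:ℝ) < t := ht'
    have htne : (t:ℂ) ≠ 0 := by exact_mod_cast ht.ne'
    have hterm : ∀ K ∈ filt, T K t
        = (Complex.exp (-(t:ℂ))
            - Complex.exp (-s^2 * t) * ((Real.exp (-(Lam d N K)*t) : ℝ):ℂ))/(t:ℂ) := by
      intro K _
      rw [hT]
      simp only
      congr 2
      rw [Complex.ofReal_exp, ← Complex.exp_add]
      congr 1
      push_cast
      ring
    rw [Finset.sum_congr rfl hterm, ← Finset.sum_div, Finset.sum_sub_distrib,
      Finset.sum_const, ← Finset.mul_sum]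
    have hθreal : ∑ K ∈ filt, Real.exp (-(Lam d N K)*t) = discTheta d N t - 1 := by
      have := theta_eq d N hN t
      rw [← hfilt] at this
      linarith
    have hθ : ∑ K ∈ filt, ((Real.exp (-(Lam d N K)*t) : ℝ):ℂ)
        = ((discTheta d N t - 1 : ℝ):ℂ) := by
      rw [← Complex.ofReal_sum, hθreal]
    rw [hθ]
    have hcard : ((filt.card : ℂ)) = ((V:ℝ):ℂ) - 1 := by
      have := card_filter_ne d N hN
      rw [← hfilt, ← hV] at this
      exact_mod_cast congrArg (fun x : ℝ => (x:ℂ)) this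
    rw [nsmul_eq_mul, hcard, hfIdef, hgdef]
    simp only
    rw [← hV]
    push_cast
    field_simp
    ring
  have hS : IntegrableOn (fun t => ∑ K ∈ filt, T K t) (Set.Ioi (0:ℝ)) :=
    integrable_finset_sum filt hTint
  have hgint : IntegrableOn g (Set.Ioi (0:ℝ)) := by
    apply IntegrableOn.congr_fun (hS.neg.sub (hfIint.const_mul ((V:ℝ):ℂ))) _ measurableSet_Ioi
    intro t ht
    have h2 := key t ht
    simp only [Pi.sub_apply, Pi.neg_apply]
    rw [h2]
    ring
  calc ∑ K ∈ filt, Complex.log (s ^ 2 + ((Lam d N K : ℝ) : ℂ))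
      = ∑ K ∈ filt, ∫ t in Set.Ioi (0:ℝ), T K t :=
        Finset.sum_congr rfl (fun K _ => frullani _ (hre K))
    _ = ∫ t in Set.Ioi (0:ℝ), ∑ K ∈ filt, T K t := (integral_finset_sum filt hTint).symm
    _ = ∫ t in Set.Ioi (0:ℝ), -(((V:ℝ):ℂ) * fI t + g t) :=
        setIntegral_congr_fun measurableSet_Ioi key
    _ = -((((V:ℝ):ℂ) * ∫ t in Set.Ioi (0:ℝ), fI t) + ∫ t in Set.Ioi (0:ℝ), g t) := by
        rw [integral_neg, integral_add (hfIint.const_mul _) hgint, integral_const_mul]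
    _ = ((∏ j, (N j : ℝ) : ℝ) : ℂ) * mathcalI d s + mathcalH d N s := by
        rw [eqI, eqH, ← hV]
        ring
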